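/- Let q be irrational and, for N ∈ ℕ and a subinterval [a,b] ⊆ [0,1), let c(N) = #{j ≤ N : frac(j·q) ∈ [a,b]} where frac denotes the fractional part. Then c(N)/N → b - a as N → ∞ (Weyl's equidistribution theorem). -/

import Mathlib

open Filter
open scoped Classical

open Filter MeasureTheory Set Finset
open scoped Real Classical

noncomputable section

lemma wl_exp_ne_one (q : ℝ) (hq : Irrational q) {n : ℤ} (hn : n ≠ 0) :
    Complex.exp (2 * Real.pi * Complex.I * n * q) ≠ 1 := by
  intro h
  rw [Complex.exp_eq_one_iff] at h
  obtain ⟨m, hm⟩ := h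
  have hpi : (2 * (Real.pi:ℂ) * Complex.I) ≠ 0 := by
    have : (Real.pi:ℂ) ≠ 0 := by exact_mod_cast Real.pi_ne_zero
    simp [this, Complex.I_ne_zero]
  have : (n : ℂ) * q = m := by
    apply mul_right_cancel₀ hpi
    linear_combination hm
  have h2 : (n : ℝ) * q = m := by exact_mod_cast this
  have h3 : Irrational ((n:ℝ) * q) := hq.intCast_mul hn
  rw [h2] at h3
  exact h3 ⟨m, rfl⟩

lemma wl_norm_exp_int (q : ℝ) (n : ℤ) :
    ‖Complex.exp (2 * Real.pi * Complex.I * n * q)‖ = 1 := by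
  have : (2 * (Real.pi:ℂ) * Complex.I * n * q) = (2 * Real.pi * n * q : ℝ) * Complex.I := by
    push_cast; ring
  rw [this, Complex.norm_exp_ofReal_mul_I]

lemma wl_geom_avg {z : ℂ} (hz : ‖z‖ = 1) (h1 : z ≠ 1) :
    Tendsto (fun N : ℕ => (∑ j ∈ Finset.Icc 1 N, z ^ j) / N) atTop (nhds 0) := by
  have h0 : (0:ℝ) < ‖1 - z‖ := by
    rw [norm_sub_rev]
    exact norm_pos_iff.2 (sub_ne_zero.2 h1)
  have key : ∀ N : ℕ, ‖∑ j ∈ Finset.Icc 1 N, z ^ j‖ ≤ 2 / ‖1 - z‖ := by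
    intro N
    have hIcc : (Finset.Icc 1 N) = Finset.Ico 1 (N + 1) := by
      rw [Finset.Ico_add_one_right_eq_Icc]
    rw [hIcc, geom_sum_Ico' h1 (Nat.le_add_left 1 N), norm_div]
    rw [div_le_div_iff₀ h0 h0]
    have : ‖z ^ 1 - z ^ (N+1)‖ ≤ 2 := by
      calc ‖z ^ 1 - z ^ (N+1)‖ ≤ ‖z ^ 1‖ + ‖z ^ (N+1)‖ := norm_sub_le _ _
        _ = 2 := by simp [norm_pow, hz]; norm_num
    nlinarith [norm_nonneg (z ^ 1 - z ^ (N+1))]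
  have hb : Tendsto (fun N : ℕ => (2 / ‖1 - z‖) / N) atTop (nhds 0) :=
    tendsto_const_div_atTop_nhds_zero_nat _
  apply squeeze_zero_norm _ hb
  intro N
  rw [norm_div, Complex.norm_natCast]
  rcases Nat.eq_zero_or_pos N with h | h
  · simp [h]
  · rw [div_le_div_iff₀ (by positivity) (by positivity)]
    have := key N
    nlinarith [norm_nonneg (∑ j ∈ Finset.Icc 1 N, z ^ j), (Nat.one_le_cast.2 h : (1:ℝ) ≤ N)]

lemma wl_vol_eq_haar : (volume : Measure (AddCircle (1:ℝ))) = AddCircle.haarAddCircle := by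
  rw [AddCircle.volume_eq_smul_haarAddCircle]
  simp

instance : IsProbabilityMeasure (volume : Measure (AddCircle (1:ℝ))) := by
  rw [wl_vol_eq_haar]; infer_instance

lemma wl_fourier_integral {n : ℤ} (hn : n ≠ 0) :
    ∫ x : AddCircle (1:ℝ), fourier n x ∂volume = 0 := by
  rw [wl_vol_eq_haar]
  exact integral_eq_zero_of_add_right_eq_neg
    (fourier_add_half_inv_index hn one_pos)

def wlAvg (q : ℝ) (f : C(AddCircle (1:ℝ), ℂ)) (N : ℕ) : ℂ :=
  (∑ j ∈ Finset.Icc 1 N, f ((j * q : ℝ) : AddCircle (1:ℝ))) / N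

def wlP (q : ℝ) (f : C(AddCircle (1:ℝ), ℂ)) : Prop :=
  Tendsto (wlAvg q f) atTop (nhds (∫ x, f x ∂volume))

lemma wlP_fourier (q : ℝ) (hq : Irrational q) (n : ℤ) : wlP q (fourier n) := by
  rcases eq_or_ne n 0 with rfl | hn
  · have h1 : ∀ N : ℕ, 1 ≤ N → wlAvg q (fourier 0) N = 1 := by
      intro N hN
      unfold wlAvg
      simp only [fourier_zero]
      rw [Finset.sum_const, Nat.card_Icc]
      have hNc : (N:ℂ) ≠ 0 := Nat.cast_ne_zero.2 (by omega)
      rw [Nat.add_sub_cancel]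
      simp [hNc]
    have h2 : (∫ x : AddCircle (1:ℝ), fourier 0 x ∂volume) = 1 := by
      simp only [fourier_zero]
      simp
    rw [wlP, h2]
    apply Tendsto.congr' _ tendsto_const_nhds
    filter_upwards [eventually_ge_atTop 1] with N hN
    exact (h1 N hN).symm
  · rw [wlP, wl_fourier_integral hn]
    set z : ℂ := Complex.exp (2 * Real.pi * Complex.I * n * q) with hz
    have hterm : ∀ j : ℕ, fourier n ((j * q : ℝ) : AddCircle (1:ℝ)) = z ^ j := by
      intro j
      rw [fourier_coe_apply, hz, ← Complex.exp_nat_mul]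
      congr 1
      push_cast
      ring
    have heq : wlAvg q (fourier n) = fun N : ℕ => (∑ j ∈ Finset.Icc 1 N, z ^ j) / N := by
      funext N; unfold wlAvg; rw [Finset.sum_congr rfl fun j _ => hterm j]
    rw [heq]
    exact wl_geom_avg (wl_norm_exp_int q n) (wl_exp_ne_one q hq hn)

lemma wl_integrable (f : C(AddCircle (1:ℝ), ℂ)) : Integrable f (volume : Measure (AddCircle (1:ℝ))) :=
  f.continuous.integrable_of_hasCompactSupport (HasCompactSupport.of_compactSpace f)

lemma wl_integrable_real (f : C(AddCircle (1:ℝ), ℝ)) : Integrable f (volume : Measure (AddCircle (1:ℝ))) :=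
  f.continuous.integrable_of_hasCompactSupport (HasCompactSupport.of_compactSpace f)

lemma wlP_add {q : ℝ} {f g : C(AddCircle (1:ℝ), ℂ)} (hf : wlP q f) (hg : wlP q g) :
    wlP q (f + g) := by
  have hint : (∫ x, (f + g) x ∂(volume : Measure (AddCircle (1:ℝ)))) =
      (∫ x, f x ∂volume) + ∫ x, g x ∂volume := by
    simp only [ContinuousMap.add_apply]
    exact integral_add (wl_integrable f) (wl_integrable g)
  have havg : wlAvg q (f + g) = fun N => wlAvg q f N + wlAvg q g N := by
    funext N
    unfold wlAvg
    simp only [ContinuousMap.add_apply]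
    rw [Finset.sum_add_distrib, add_div]
  rw [wlP, hint, havg]
  exact hf.add hg

lemma wlP_smul {q : ℝ} (c : ℂ) {f : C(AddCircle (1:ℝ), ℂ)} (hf : wlP q f) :
    wlP q (c • f) := by
  have hint : (∫ x, (c • f) x ∂(volume : Measure (AddCircle (1:ℝ)))) =
      c • ∫ x, f x ∂volume := by
    simp only [ContinuousMap.smul_apply]
    exact integral_smul c _
  have havg : wlAvg q (c • f) = fun N => c • wlAvg q f N := by
    funext N
    unfold wlAvg
    simp only [ContinuousMap.smul_apply, smul_eq_mul]
    rw [← Finset.mul_sum, mul_div_assoc]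
  rw [wlP, hint, havg]
  exact hf.const_smul c

lemma wlP_span {q : ℝ} (hq : Irrational q) {f : C(AddCircle (1:ℝ), ℂ)}
    (hf : f ∈ Submodule.span ℂ (Set.range (@fourier 1))) : wlP q f := by
  induction hf using Submodule.span_induction with
  | mem g hg => obtain ⟨n, rfl⟩ := hg; exact wlP_fourier q hq n
  | zero =>
      have : wlAvg q 0 = fun _ => 0 := by
        funext N; unfold wlAvg; simp
      rw [wlP, this]
      simpa using tendsto_const_nhds
  | add g h _ _ hg hh => exact wlP_add hg hh
  | smul c g _ hg => exact wlP_smul c hg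

lemma wl_avg_dist (q : ℝ) (f g : C(AddCircle (1:ℝ), ℂ)) (N : ℕ) :
    dist (wlAvg q f N) (wlAvg q g N) ≤ dist f g := by
  rcases Nat.eq_zero_or_pos N with rfl | hN
  · simp [wlAvg, dist_nonneg]
  unfold wlAvg
  rw [dist_eq_norm, div_sub_div_same, ← Finset.sum_sub_distrib, norm_div,
    Complex.norm_natCast]
  rw [div_le_iff₀ (by exact_mod_cast hN)]
  calc ‖∑ j ∈ Finset.Icc 1 N, (f ((j*q:ℝ) : AddCircle (1:ℝ)) - g ((j*q:ℝ) : AddCircle (1:ℝ)))‖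
      ≤ ∑ j ∈ Finset.Icc 1 N, ‖f ((j*q:ℝ) : AddCircle (1:ℝ)) - g ((j*q:ℝ) : AddCircle (1:ℝ))‖ :=
        norm_sum_le _ _
    _ ≤ ∑ j ∈ Finset.Icc 1 N, dist f g := by
        apply Finset.sum_le_sum
        intro j _
        rw [← dist_eq_norm]
        exact ContinuousMap.dist_apply_le_dist _
    _ = N * dist f g := by rw [Finset.sum_const, Nat.card_Icc, Nat.add_sub_cancel, nsmul_eq_mul]
    _ = dist f g * N := by ring

lemma wl_integral_dist (f g : C(AddCircle (1:ℝ), ℂ)) :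
    dist (∫ x, f x ∂(volume : Measure (AddCircle (1:ℝ)))) (∫ x, g x ∂volume) ≤ dist f g := by
  rw [dist_eq_norm, ← integral_sub (wl_integrable f) (wl_integrable g)]
  calc ‖∫ x, (f x - g x) ∂(volume : Measure (AddCircle (1:ℝ)))‖
      ≤ dist f g * (volume (Set.univ : Set (AddCircle (1:ℝ)))).toReal := by
        apply norm_integral_le_of_norm_le_const
        filter_upwards with x
        rw [← dist_eq_norm]
        exact ContinuousMap.dist_apply_le_dist _
    _ = dist f g := by simp

lemma wlP_all (q : ℝ) (hq : Irrational q) (f : C(AddCircle (1:ℝ), ℂ)) : wlP q f := by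
  rw [wlP, Metric.tendsto_atTop]
  intro ε hε
  have hdense : f ∈ closure ((Submodule.span ℂ (Set.range (@fourier 1)) : Submodule ℂ _) : Set _) := by
    have h1 : f ∈ (Submodule.span ℂ (Set.range (@fourier 1))).topologicalClosure := by
      rw [span_fourier_closure_eq_top]; trivial
    rwa [← Submodule.topologicalClosure_coe]
  obtain ⟨g, hg_mem, hg_dist⟩ := Metric.mem_closure_iff.1 hdense (ε/3) (by positivity)
  obtain ⟨N₀, hN₀⟩ := Metric.tendsto_atTop.1 (wlP_span hq hg_mem) (ε/3) (by positivity)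
  refine ⟨N₀, fun n hn => ?_⟩
  calc dist (wlAvg q f n) (∫ x, f x ∂volume)
      ≤ dist (wlAvg q f n) (wlAvg q g n) + dist (wlAvg q g n) (∫ x, g x ∂volume)
        + dist (∫ x, g x ∂(volume : Measure (AddCircle (1:ℝ)))) (∫ x, f x ∂volume) :=
        dist_triangle4 _ _ _ _
    _ < ε/3 + ε/3 + ε/3 := by
        have b1 := wl_avg_dist q f g n
        have b3 := wl_integral_dist g f
        have : dist g f = dist f g := dist_comm g f
        have hb := hN₀ n hn
        gcongr <;> linarith [this ▸ b3]
    _ = ε := by ring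

lemma wlP_real (q : ℝ) (hq : Irrational q) (f : C(AddCircle (1:ℝ), ℝ)) :
    Tendsto (fun N : ℕ => (∑ j ∈ Finset.Icc 1 N, f ((j * q : ℝ) : AddCircle (1:ℝ))) / N)
      atTop (nhds (∫ x, f x ∂volume)) := by
  set fC : C(AddCircle (1:ℝ), ℂ) :=
    (⟨Complex.ofReal, Complex.continuous_ofReal⟩ : C(ℝ, ℂ)).comp f with hfC
  have hint : (∫ x, fC x ∂(volume : Measure (AddCircle (1:ℝ)))) = ((∫ x, f x ∂volume : ℝ) : ℂ) := by
    simp only [hfC, ContinuousMap.comp_apply, ContinuousMap.coe_mk]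
    exact integral_ofReal
  have h := wlP_all q hq fC
  rw [wlP, hint] at h
  have h2 := (Complex.continuous_re.tendsto _).comp h
  simp only [Complex.ofReal_re] at h2
  apply h2.congr
  intro N
  simp only [Function.comp_apply]
  have : wlAvg q fC N = (((∑ j ∈ Finset.Icc 1 N, f ((j * q : ℝ) : AddCircle (1:ℝ))) / N : ℝ) : ℂ) := by
    simp only [wlAvg, hfC, ContinuousMap.comp_apply, ContinuousMap.coe_mk]
    push_cast
    ring
  rw [this, Complex.ofReal_re]

lemma wl_coe_eq_coe {x y : ℝ} (h : (x : AddCircle (1:ℝ)) = y) : ∃ k : ℤ, y - x = k := by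
  rw [QuotientAddGroup.eq_iff_sub_mem] at h
  obtain ⟨k, hk⟩ := AddSubgroup.mem_zmultiples_iff.1 h
  refine ⟨-k, ?_⟩
  have : (k : ℝ) * 1 = x - y := by simpa using hk
  push_cast
  linarith

lemma wl_coe_eq_of_int {x y : ℝ} (k : ℤ) (h : y - x = k) : (x : AddCircle (1:ℝ)) = y := by
  rw [QuotientAddGroup.eq_iff_sub_mem, AddSubgroup.mem_zmultiples_iff]
  refine ⟨-k, ?_⟩
  rw [zsmul_eq_mul, mul_one]
  push_cast
  linarith

lemma wl_mem_iff {a b : ℝ} (ha : 0 ≤ a) (hb : b < 1) (x : ℝ) :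
    Int.fract x ∈ Set.Icc a b ↔
      ((x : ℝ) : AddCircle (1:ℝ)) ∈ ((↑) '' Set.Icc a b : Set (AddCircle (1:ℝ))) := by
  constructor
  · intro h
    refine ⟨Int.fract x, h, ?_⟩
    exact wl_coe_eq_of_int (⌊x⌋) (by rw [Int.self_sub_fract])
  · rintro ⟨y, hy, hxy⟩
    obtain ⟨k, hk⟩ := wl_coe_eq_coe hxy.symm
    have hyy : Int.fract y = y := Int.fract_eq_self.2 ⟨le_trans ha hy.1, lt_of_le_of_lt hy.2 hb⟩
    have : Int.fract x = Int.fract y := by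
      rw [Int.fract_eq_fract]
      exact ⟨-k, by push_cast; linarith⟩
    rw [this, hyy]
    exact hy

lemma wl_vol_s {a b : ℝ} (hab : a ≤ b) (ha : 0 ≤ a) (hb : b < 1) :
    volume (((↑) '' Set.Icc a b : Set (AddCircle (1:ℝ)))) = ENNReal.ofReal (b - a) := by
  set s : Set (AddCircle (1:ℝ)) := (↑) '' Set.Icc a b with hs
  have hc : Continuous ((↑) : ℝ → AddCircle (1:ℝ)) := continuous_quotient_mk'
  have hmeas : MeasurableSet s :=
    ((isCompact_Icc.image hc).isClosed).measurableSet
  have hproj := AddCircle.add_projection_respects_measure (T := 1) 0 hmeas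
  rw [zero_add] at hproj
  have hsub1 : Set.Ioc a b ⊆ (QuotientAddGroup.mk ⁻¹' s ∩ Set.Ioc 0 1) := by
    intro x hx
    exact ⟨⟨x, ⟨le_of_lt hx.1, hx.2⟩, rfl⟩, ⟨lt_of_le_of_lt ha hx.1, le_of_lt (lt_of_le_of_lt hx.2 hb)⟩⟩
  have hsub2 : (QuotientAddGroup.mk ⁻¹' s ∩ Set.Ioc 0 1) ⊆ Set.Icc a b ∪ {1} := by
    rintro x ⟨⟨y, hy, hyx⟩, hx01⟩
    obtain ⟨k, hk⟩ := wl_coe_eq_coe hyx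
    have hk01 : k = 0 ∨ k = 1 := by
      have h1 : (k:ℝ) = x - y := by linarith
      have : -1 < (k:ℝ) ∧ (k:ℝ) ≤ 1 := by
        constructor <;> rw [h1]
        · nlinarith [hx01.1, hy.2, hb, hy.1, ha]
        · nlinarith [hx01.2, hy.1, ha]
      have h2 : -1 < k ∧ k ≤ 1 := by exact_mod_cast this
      omega
    rcases hk01 with rfl | rfl
    · left
      have : x = y := by push_cast at hk; linarith
      rw [this]; exact hy
    · right
      have hy0 : y = 0 := by
        have : x = y + 1 := by push_cast at hk; linarith
        have := hx01.2
        have hy2 : y ≤ 0 := by linarith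
        linarith [le_trans ha hy.1]
      have : x = 1 := by push_cast at hk; linarith
      simp [this]
  refine le_antisymm ?_ ?_
  · rw [hproj]
    calc volume (QuotientAddGroup.mk ⁻¹' s ∩ Set.Ioc 0 1)
        ≤ volume (Set.Icc a b ∪ {1}) := measure_mono hsub2
      _ ≤ volume (Set.Icc a b) + volume ({1} : Set ℝ) := measure_union_le _ _
      _ = ENNReal.ofReal (b - a) := by rw [Real.volume_Icc, Real.volume_singleton, add_zero]
  · rw [hproj]
    calc ENNReal.ofReal (b - a) = volume (Set.Ioc a b) := (Real.volume_Ioc).symm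
      _ ≤ volume (QuotientAddGroup.mk ⁻¹' s ∩ Set.Ioc 0 1) := measure_mono hsub1

lemma wl_vol_V {a b : ℝ} (ha : 0 ≤ a) (hb : b < 1) :
    ENNReal.ofReal (b - a) ≤ volume (((↑) '' Set.Ioo a b : Set (AddCircle (1:ℝ)))) := by
  set V : Set (AddCircle (1:ℝ)) := (↑) '' Set.Ioo a b with hV
  have hopen : IsOpen V := QuotientAddGroup.isOpenMap_coe _ isOpen_Ioo
  have hproj := AddCircle.add_projection_respects_measure (T := 1) 0 hopen.measurableSet
  rw [zero_add] at hproj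
  have hsub : Set.Ioo a b ⊆ (QuotientAddGroup.mk ⁻¹' V ∩ Set.Ioc 0 1) := by
    intro x hx
    exact ⟨⟨x, hx, rfl⟩, ⟨lt_of_le_of_lt ha hx.1, le_of_lt (lt_trans hx.2 hb)⟩⟩
  calc ENNReal.ofReal (b - a) = volume (Set.Ioo a b) := (Real.volume_Ioo).symm
    _ ≤ volume (QuotientAddGroup.mk ⁻¹' V ∩ Set.Ioc 0 1) := measure_mono hsub
    _ = volume V := hproj.symm

theorem stmt_8 (q : ℝ) (hq : Irrational q) (a b : ℝ)
    (hab : a ≤ b) (ha : 0 ≤ a) (hb : b < 1) :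
    Filter.Tendsto
      (fun N : ℕ =>
        (((Finset.Icc 1 N).filter
            (fun j : ℕ => Int.fract ((j : ℝ) * q) ∈ Set.Icc a b)).card : ℝ) / N)
      Filter.atTop (nhds (b - a)) := by
  set s : Set (AddCircle (1:ℝ)) := (↑) '' Set.Icc a b with hsdef
  have hc : Continuous ((↑) : ℝ → AddCircle (1:ℝ)) := continuous_quotient_mk'
  have hs_comp : IsCompact s := isCompact_Icc.image hc
  have hvol : volume s = ENNReal.ofReal (b - a) := wl_vol_s hab ha hb
  set F : ℕ → ℝ := fun N =>
    (((Finset.Icc 1 N).filter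
        (fun j : ℕ => Int.fract ((j : ℝ) * q) ∈ Set.Icc a b)).card : ℝ) / N with hF
  have hcount : ∀ N : ℕ, (((Finset.Icc 1 N).filter
      (fun j : ℕ => Int.fract ((j:ℝ) * q) ∈ Set.Icc a b)).card : ℝ)
      = ∑ j ∈ Finset.Icc 1 N, (if (((j:ℝ)*q : ℝ) : AddCircle (1:ℝ)) ∈ s then (1:ℝ) else 0) := by
    intro N
    rw [Finset.card_filter]
    push_cast
    apply Finset.sum_congr rfl
    intro j _
    by_cases h : Int.fract ((j:ℝ)*q) ∈ Set.Icc a b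
    · rw [if_pos h, if_pos ((wl_mem_iff ha hb _).1 h)]
    · rw [if_neg h, if_neg (fun hh => h ((wl_mem_iff ha hb _).2 hh))]
  have hF_nonneg : ∀ N, 0 ≤ F N := by
    intro N; rw [hF]; positivity
  rw [Metric.tendsto_atTop]
  intro ε hε
  -- upper bound
  obtain ⟨U, hsU, hUopen, hUvol⟩ := Set.exists_isOpen_lt_add (μ := (volume : Measure (AddCircle (1:ℝ)))) s
    (by simp [hvol]) (ne_of_gt (ENNReal.ofReal_pos.2 (half_pos hε)))
  obtain ⟨f, hf1, hf0, _, hf01⟩ := exists_continuous_one_zero_of_isCompact hs_comp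
    hUopen.isClosed_compl (disjoint_compl_right_iff_subset.2 hsU)
  have hUfin : volume U < ⊤ := measure_lt_top _ _
  have hUind : Integrable (U.indicator (fun _ => (1:ℝ))) (volume : Measure (AddCircle (1:ℝ))) := by
    rw [integrable_indicator_iff hUopen.measurableSet]
    exact integrableOn_const hUfin.ne
  have hint_f : ∫ x, f x ∂(volume : Measure (AddCircle (1:ℝ))) ≤ b - a + ε/2 := by
    calc ∫ x, f x ∂(volume : Measure (AddCircle (1:ℝ)))
        ≤ ∫ x, U.indicator (fun _ => (1:ℝ)) x ∂volume := by
          apply integral_mono (wl_integrable_real f) hUind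
          intro x
          by_cases h : x ∈ U
          · rw [Set.indicator_of_mem h]; exact (hf01 x).2
          · rw [Set.indicator_of_notMem h]; exact le_of_eq (hf0 h)
      _ = (volume U).toReal := by
          rw [integral_indicator_const _ hUopen.measurableSet]; simp [Measure.real]
      _ ≤ b - a + ε/2 := by
          apply ENNReal.toReal_le_of_le_ofReal (by linarith)
          have he : ENNReal.ofReal (b - a + ε/2)
              = ENNReal.ofReal (b - a) + ENNReal.ofReal (ε/2) :=
            ENNReal.ofReal_add (by linarith) (by linarith)
          rw [he, ← hvol]
          exact hUvol.le
  have hupper : ∀ᶠ N in atTop, F N < b - a + ε := by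
    have havgf := wlP_real q hq f
    have h1 : ∀ᶠ N : ℕ in atTop,
        (∑ j ∈ Finset.Icc 1 N, f (((j:ℝ) * q : ℝ) : AddCircle (1:ℝ))) / N < b - a + ε :=
      havgf.eventually_lt_const (by linarith)
    filter_upwards [h1, eventually_ge_atTop 1] with N hN hN1
    refine lt_of_le_of_lt ?_ hN
    rw [hF]
    simp only
    rw [hcount N]
    have hNpos : (0:ℝ) < N := by exact_mod_cast hN1
    apply (div_le_div_iff_of_pos_right hNpos).2 ?_
    apply Finset.sum_le_sum
    intro j hj
    by_cases h : (((j:ℝ)*q : ℝ) : AddCircle (1:ℝ)) ∈ s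
    · rw [if_pos h]; exact (hf1 h).ge
    · rw [if_neg h]; exact (hf01 _).1
  -- lower bound
  have hlower : ∀ᶠ N in atTop, b - a - ε < F N := by
    rcases lt_or_ge (b - a - ε) 0 with hneg | hpos
    · exact Filter.Eventually.of_forall fun N => lt_of_lt_of_le hneg (hF_nonneg N)
    · have hba : 0 < b - a := by linarith
      set V : Set (AddCircle (1:ℝ)) := (↑) '' Set.Ioo a b with hVdef
      have hVopen : IsOpen V := QuotientAddGroup.isOpenMap_coe _ isOpen_Ioo
      have hVs : V ⊆ s := Set.image_mono Set.Ioo_subset_Icc_self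
      have hVvol : ENNReal.ofReal (b - a) ≤ volume V := wl_vol_V ha hb
      have hr : ENNReal.ofReal (b - a - ε/2) < volume V := by
        refine lt_of_lt_of_le ?_ hVvol
        exact ENNReal.ofReal_lt_ofReal_iff hba |>.2 (by linarith)
      obtain ⟨K, hKV, hKcomp, hKvol⟩ := hVopen.exists_lt_isCompact hr
      obtain ⟨g, hg1, hg0, _, hg01⟩ := exists_continuous_one_zero_of_isCompact hKcomp
        hVopen.isClosed_compl (disjoint_compl_right_iff_subset.2 hKV)
      have hKind : Integrable (K.indicator (fun _ => (1:ℝ)))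
          (volume : Measure (AddCircle (1:ℝ))) := by
        rw [integrable_indicator_iff hKcomp.isClosed.measurableSet]
        exact integrableOn_const (measure_lt_top _ _).ne
      have hint_g : b - a - ε/2 ≤ ∫ x, g x ∂(volume : Measure (AddCircle (1:ℝ))) := by
        calc b - a - ε/2 ≤ (volume K).toReal := by
              rw [← ENNReal.toReal_ofReal (show (0:ℝ) ≤ b - a - ε/2 by linarith)]
              exact ENNReal.toReal_mono (measure_lt_top _ _).ne hKvol.le
          _ = ∫ x, K.indicator (fun _ => (1:ℝ)) x ∂volume := by
              rw [integral_indicator_const _ hKcomp.isClosed.measurableSet]; simp [Measure.real]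
          _ ≤ ∫ x, g x ∂(volume : Measure (AddCircle (1:ℝ))) := by
              apply integral_mono hKind (wl_integrable_real g)
              intro x
              by_cases h : x ∈ K
              · rw [Set.indicator_of_mem h]; exact (hg1 h).ge
              · rw [Set.indicator_of_notMem h]; exact (hg01 x).1
      have havgg := wlP_real q hq g
      have h1 : ∀ᶠ N : ℕ in atTop,
          b - a - ε < (∑ j ∈ Finset.Icc 1 N, g (((j:ℝ) * q : ℝ) : AddCircle (1:ℝ))) / N :=
        havgg.eventually_const_lt (by linarith)
      filter_upwards [h1, eventually_ge_atTop 1] with N hN hN1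
      refine lt_of_lt_of_le hN ?_
      rw [hF]
      simp only
      rw [hcount N]
      have hNpos : (0:ℝ) < N := by exact_mod_cast hN1
      apply (div_le_div_iff_of_pos_right hNpos).2 ?_
      apply Finset.sum_le_sum
      intro j hj
      by_cases h : (((j:ℝ)*q : ℝ) : AddCircle (1:ℝ)) ∈ s
      · rw [if_pos h]; exact (hg01 _).2
      · rw [if_neg h]
        have : (((j:ℝ)*q : ℝ) : AddCircle (1:ℝ)) ∉ V := fun hh => h (hVs hh)
        exact (hg0 this).le
  obtain ⟨N₀, hN₀⟩ := (hupper.and hlower).exists_forall_of_atTop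
  refine ⟨N₀, fun n hn => ?_⟩
  obtain ⟨hu, hl⟩ := hN₀ n hn
  rw [Real.dist_eq, abs_lt]
  constructor <;> linarith
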